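/- Let c : ℝ^p → ℝ be c(z) = min(h(‖z‖), C_r) with h non-decreasing non-negative and C_r > 0. For any y ∈ ℝ^p and any Lebesgue-measurable set A ⊆ ℝ^p of finite measure, ∫_A c(x − y) dx ≥ ∫_{B(y,|A|)} c(x − y) dx, where B(y,|A|) is the norm-ball centered at y with the same Lebesgue measure as A. -/

import Mathlib

open MeasureTheory Metric

/-- With `c z = min (h ‖z‖) C_r`, for any `y` and any measurable set `A` of
finite measure, `∫_A c (x - y) dx ≥ ∫_{B(y,|A|)} c (x - y) dx`, where `B(y,|A|)` is the
norm-ball centered at `y` with the same Lebesgue measure as `A` (radius `R`). -/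
theorem stmt1 {E : Type*} [NormedAddCommGroup E] [NormedSpace ℝ E]
    [MeasurableSpace E] [BorelSpace E] [FiniteDimensional ℝ E]
    (μ : Measure E) [μ.IsAddHaarMeasure]
    (h : ℝ → ℝ) (hmono : Monotone h) (hnonneg : ∀ d, 0 ≤ h d)
    (Cr : ℝ) (hCr : 0 < Cr)
    (y : E) (A : Set E) (hA : MeasurableSet A) (hAfin : μ A < ⊤)
    (R : ℝ) (hRnonneg : 0 ≤ R) (hR : μ (closedBall y R) = μ A) :
    ∫ x in closedBall y R, min (h ‖x - y‖) Cr ∂μ ≤ ∫ x in A, min (h ‖x - y‖) Cr ∂μ := by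
  set B := closedBall y R with hBdef
  set c : E → ℝ := fun x => min (h ‖x - y‖) Cr with hcdef
  have hB : MeasurableSet B := measurableSet_closedBall
  have hBfin : μ B < ⊤ := measure_closedBall_lt_top
  have hcmeas : Measurable c :=
    (hmono.measurable.comp ((measurable_id.sub_const y).norm)).min measurable_const
  have hc0 : ∀ x, 0 ≤ c x := fun x => le_min (hnonneg _) hCr.le
  have hcCr : ∀ x, c x ≤ Cr := fun x => min_le_right _ _
  have hint : ∀ s : Set E, μ s < ⊤ → IntegrableOn c s μ := by
    intro s hs
    refine Measure.integrableOn_of_bounded (M := Cr) hs.ne hcmeas.aestronglyMeasurable ?_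
    filter_upwards with x
    rw [Real.norm_eq_abs, abs_of_nonneg (hc0 x)]
    exact hcCr x
  set m := min (h R) Cr with hmdef
  -- measure equality of the two differences
  have hABfin : μ (A ∩ B) ≠ ⊤ := (lt_of_le_of_lt (measure_mono Set.inter_subset_left) hAfin).ne
  have hmeq : μ (A \ B) = μ (B \ A) := by
    have h1 : μ (A ∩ B) + μ (A \ B) = μ A := measure_inter_add_diff A hB
    have h2 : μ (A ∩ B) + μ (B \ A) = μ B := by
      rw [Set.inter_comm]; exact measure_inter_add_diff B hA
    have : μ (A ∩ B) + μ (A \ B) = μ (A ∩ B) + μ (B \ A) := by rw [h1, h2, hR]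
    exact (ENNReal.cancel_of_ne hABfin).inj.mp this
  have hdiff1fin : μ (A \ B) < ⊤ := lt_of_le_of_lt (measure_mono Set.diff_subset) hAfin
  have hdiff2fin : μ (B \ A) < ⊤ := lt_of_le_of_lt (measure_mono Set.diff_subset) hBfin
  -- upper bound on B \ A
  have hub : ∫ x in B \ A, c x ∂μ ≤ (μ (B \ A)).toReal * m := by
    have := setIntegral_mono_on (hint _ hdiff2fin)
      (integrableOn_const (C := m) hdiff2fin.ne) (hB.diff hA)
      (fun x hx => by
        have hx' : ‖x - y‖ ≤ R := by
          have := hx.1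
          rwa [hBdef, mem_closedBall, dist_eq_norm] at this
        exact min_le_min (hmono hx') le_rfl)
    simpa [setIntegral_const, smul_eq_mul, Measure.real, hmdef] using this
  -- lower bound on A \ B
  have hlb : (μ (A \ B)).toReal * m ≤ ∫ x in A \ B, c x ∂μ := by
    have := setIntegral_mono_on (integrableOn_const (C := m) hdiff1fin.ne)
      (hint _ hdiff1fin) (hA.diff hB)
      (fun x hx => by
        have hx' : R ≤ ‖x - y‖ := by
          have := hx.2
          rw [hBdef, mem_closedBall, dist_eq_norm, not_le] at this
          exact this.le
        exact min_le_min (hmono hx') le_rfl)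
    simpa [setIntegral_const, smul_eq_mul, Measure.real, hmdef] using this
  have key : ∫ x in B \ A, c x ∂μ ≤ ∫ x in A \ B, c x ∂μ := by
    calc ∫ x in B \ A, c x ∂μ ≤ (μ (B \ A)).toReal * m := hub
    _ = (μ (A \ B)).toReal * m := by rw [hmeq]
    _ ≤ ∫ x in A \ B, c x ∂μ := hlb
  have hsplitA : ∫ x in A ∩ B, c x ∂μ + ∫ x in A \ B, c x ∂μ = ∫ x in A, c x ∂μ :=
    integral_inter_add_diff hB (hint _ hAfin)
  have hsplitB : ∫ x in A ∩ B, c x ∂μ + ∫ x in B \ A, c x ∂μ = ∫ x in B, c x ∂μ := by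
    rw [Set.inter_comm]; exact integral_inter_add_diff hA (hint _ hBfin)
  linarith
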